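/- arXiv:1304.1402 — 5 statements merged into one kernel-verified Lean document; each statement's English description precedes it below -/
import Mathlib

section
/- Consider the theory T consisting of the universally quantified clauses: G(x) ∨ B(x); B(x₁) ∨ ¬E(x₁,x₀) ∨ ¬G(x₀); and G(x₁) ∨ ¬E(x₁,x₀) ∨ ¬B(x₀). Then for every positive even number n, T entails the datalog rule E(xₙ,x₀) ∧ E(xₙ,xₙ₋₁) ∧ … ∧ E(x₁,x₀) → G(xₙ). -/
/-- The theory with clauses `G(x) ∨ B(x)`, `B(x₁) ∨ ¬E(x₁,x₀) ∨ ¬G(x₀)`,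
`G(x₁) ∨ ¬E(x₁,x₀) ∨ ¬B(x₀)` entails, for every positive even `n`, the datalog rule
`E(xₙ,x₀) ∧ E(xₙ,xₙ₋₁) ∧ … ∧ E(x₁,x₀) → G(xₙ)`.  Entailment is expressed semantically:
the conclusion holds in every model of the three clauses. -/
theorem elu_entails_even_cycle_rules :
    ∀ (D : Type) (G B : D → Prop) (E : D → D → Prop),
      (∀ x, G x ∨ B x) →
      (∀ x1 x0, B x1 ∨ ¬ E x1 x0 ∨ ¬ G x0) →
      (∀ x1 x0, G x1 ∨ ¬ E x1 x0 ∨ ¬ B x0) →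
      ∀ n : ℕ, 0 < n → Even n →
        ∀ x : ℕ → D,
          E (x n) (x 0) →
          (∀ i, 1 ≤ i → i ≤ n → E (x i) (x (i - 1))) →
          G (x n) := by
  intro D G B E htot hGB hBG n hn hev x hshort hchain
  have hstep1 : ∀ a b : D, E a b → G b → B a := by
    intro a b hE hG
    rcases hGB a b with h | h | h
    · exact h
    · exact absurd hE h
    · exact absurd hG h
  have hstep2 : ∀ a b : D, E a b → B b → G a := by
    intro a b hE hB
    rcases hBG a b with h | h | h
    · exact h
    · exact absurd hE h
    · exact absurd hB h
  rcases htot (x 0) with hG0 | hB0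
  · -- propagate along the chain
    have key : ∀ i, i ≤ n → (Even i → G (x i)) ∧ (¬ Even i → B (x i)) := by
      intro i
      induction i with
      | zero => exact fun _ => ⟨fun _ => hG0, fun h => absurd Even.zero h⟩
      | succ k ih =>
        intro hle
        have hk := ih (by omega)
        have hE : E (x (k + 1)) (x k) := by
          have := hchain (k + 1) (by omega) hle
          simpa using this
        constructor
        · intro hevk
          have : ¬ Even k := by simpa [Nat.even_add_one] using hevk
          exact hstep2 _ _ hE (hk.2 this)
        · intro hodk
          have : Even k := by
            by_contra h
            exact hodk (by simpa [Nat.even_add_one] using h)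
          exact hstep1 _ _ hE (hk.1 this)
    exact (key n le_rfl).1 hev
  · exact hstep2 _ _ hshort hB0
end

section
/- Let T be the theory {∀x. G(x) ∨ B(x); ∀x₁x₀. E(x₁,x₀) ∧ G(x₀) → B(x₁); ∀x₁x₀. E(x₁,x₀) ∧ B(x₀) → G(x₁)}. For every finite set A of ground atoms over the predicate E and every constant v: T ∪ A ⊨ G(v) if and only if there exists a constant w such that v is reachable from w in the directed graph given by A (with E(u,u') meaning an edge from u' to u traversed towards u) by a path of positive even length and also by a path of positive odd length. -/
/-- `v` is reachable from `w` by a path of length `n` in the set of `E`-atoms `A`: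
there are `u_n = v, …, u_0 = w` with `E(uᵢ,uᵢ₋₁) ∈ A` for `1 ≤ i ≤ n`. -/
def ReachBy {C : Type} (A : Set (C × C)) (v w : C) (n : ℕ) : Prop :=
  ∃ u : ℕ → C, u n = v ∧ u 0 = w ∧ ∀ i, 1 ≤ i → i ≤ n → (u i, u (i - 1)) ∈ A

/-- `T ∪ A ⊨ G(v)` where `T = {∀x. G(x)∨B(x); ∀x₁x₀. E(x₁,x₀)∧G(x₀)→B(x₁);
∀x₁x₀. E(x₁,x₀)∧B(x₀)→G(x₁)}` and `A` is a set of ground `E`-atoms over constants `C`. -/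
def TAEntailsG {C : Type} (A : Set (C × C)) (v : C) : Prop :=
  ∀ (D : Type) (cv : C → D) (G B : D → Prop) (E : D → D → Prop),
    (∀ x, G x ∨ B x) →
    (∀ x1 x0, E x1 x0 → G x0 → B x1) →
    (∀ x1 x0, E x1 x0 → B x0 → G x1) →
    (∀ p ∈ A, E (cv p.1) (cv p.2)) →
    G (cv v)

lemma reach_zero {C : Type} (A : Set (C × C)) (x : C) : ReachBy A x x 0 :=
  ⟨fun _ => x, rfl, rfl, fun i h1 h0 => absurd (h1.trans h0) (by omega)⟩

lemma reach_zero_eq {C : Type} {A : Set (C × C)} {v w : C} (h : ReachBy A v w 0) : v = w := by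
  obtain ⟨u, h1, h2, _⟩ := h
  exact h1.symm.trans h2

lemma reach_extend {C : Type} {A : Set (C × C)} {v w x : C} {n : ℕ}
    (h : ReachBy A v w n) (he : (x, v) ∈ A) : ReachBy A x w (n + 1) := by
  obtain ⟨u, hn, h0, hE⟩ := h
  refine ⟨fun i => if i ≤ n then u i else x, by simp, by simp [h0], ?_⟩
  intro i hi1 hi2
  by_cases h : i ≤ n
  · have h' : i - 1 ≤ n := by omega
    simpa [h, h'] using hE i hi1 h
  · have hi : i = n + 1 := by omega
    have h' : i - 1 ≤ n := by omega
    simpa [h, h', hi, hn] using he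

lemma reach_concat {C : Type} {A : Set (C × C)} {v y w : C} {n m : ℕ}
    (h1 : ReachBy A y w n) (h2 : ReachBy A v y m) : ReachBy A v w (n + m) := by
  obtain ⟨u, hun, hu0, huE⟩ := h1
  obtain ⟨t, htm, ht0, htE⟩ := h2
  refine ⟨fun i => if i ≤ n then u i else t (i - n), ?_, by simp [hu0], ?_⟩
  · by_cases h : m = 0
    · subst h
      simp only [Nat.add_zero, le_refl, if_pos]
      rw [hun, ← ht0, htm]
    · have h' : ¬ (n + m ≤ n) := by omega
      simp only [h', if_neg, Nat.add_sub_cancel_left]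
      exact htm
  · intro i hi1 hi2
    by_cases h : i ≤ n
    · have h' : i - 1 ≤ n := by omega
      simpa [h, h'] using huE i hi1 h
    · by_cases h' : i - 1 ≤ n
      · have hi : i = n + 1 := by omega
        have h1m : 1 ≤ m := by omega
        have := htE 1 le_rfl h1m
        have hb : u (i - 1) = t (i - n - 1) := by
          rw [hi, show n + 1 - 1 = n from by omega,
            show n + 1 - n - 1 = 0 from by omega, hun, ht0]
        simp only [h, if_neg, h', if_pos]
        rw [hb]
        simpa [hi, show n + 1 - n = 1 from by omega,
          show n + 1 - n - 1 = 0 from by omega] using this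
      · have h1 : 1 ≤ i - n := by omega
        have h2 : i - n ≤ m := by omega
        have := htE (i - n) h1 h2
        simpa [h, h', show i - 1 - n = i - n - 1 from by omega] using this

lemma reach_parity {C D : Type} {A : Set (C × C)} (cv : C → D) (G B : D → Prop)
    (E : D → D → Prop)
    (hGB2 : ∀ x1 x0, E x1 x0 → G x0 → B x1)
    (hBG : ∀ x1 x0, E x1 x0 → B x0 → G x1)
    (hA : ∀ p ∈ A, E (cv p.1) (cv p.2))
    {v w : C} {n : ℕ} (h : ReachBy A v w n) :
    (Even n → (G (cv w) → G (cv v)) ∧ (B (cv w) → B (cv v))) ∧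
    (Odd n → (G (cv w) → B (cv v)) ∧ (B (cv w) → G (cv v))) := by
  obtain ⟨u, hn, h0, hE⟩ := h
  subst hn; subst h0
  suffices H : ∀ i, i ≤ n →
      (Even i → (G (cv (u 0)) → G (cv (u i))) ∧ (B (cv (u 0)) → B (cv (u i)))) ∧
      (Odd i → (G (cv (u 0)) → B (cv (u i))) ∧ (B (cv (u 0)) → G (cv (u i)))) from
    H n le_rfl
  intro i
  induction i with
  | zero =>
    intro _
    refine ⟨fun _ => ⟨id, id⟩, fun hodd => absurd hodd (by simp)⟩
  | succ k ih =>
    intro hk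
    have ihk := ih (by omega)
    have hedge : E (cv (u (k + 1))) (cv (u k)) := by
      have hm := hE (k + 1) (by omega) hk
      simpa using hA _ hm
    constructor
    · intro hev
      have hok : Odd k := by
        rcases Nat.even_or_odd k with hk' | hk'
        · exact absurd (hk'.add_one) (by simpa using hev)
        · exact hk'
      exact ⟨fun hg => hBG _ _ hedge ((ihk.2 hok).1 hg),
             fun hb => hGB2 _ _ hedge ((ihk.2 hok).2 hb)⟩
    · intro hod
      have hek : Even k := by
        rcases Nat.even_or_odd k with hk' | hk'
        · exact hk'
        · exact absurd hod (by simpa using hk'.add_one)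
      exact ⟨fun hg => hGB2 _ _ hedge ((ihk.1 hek).1 hg),
             fun hb => hBG _ _ hedge ((ihk.1 hek).2 hb)⟩

/-- `T ∪ A ⊨ G(v)` iff some constant `w` reaches `v` by both a path of
positive even length and a path of positive odd length. -/
theorem entailsG_iff_even_and_odd_reach {C : Type} (A : Finset (C × C)) (v : C) :
    TAEntailsG (↑A : Set (C × C)) v ↔
      ∃ w : C, (∃ n, 0 < n ∧ Even n ∧ ReachBy (↑A : Set (C × C)) v w n) ∧
               (∃ n, 0 < n ∧ Odd n ∧ ReachBy (↑A : Set (C × C)) v w n) := by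
  constructor
  · intro hent
    by_contra hno
    push_neg at hno
    -- Countermodel: interpret over C itself.
    set OddV : C → Prop := fun w => ∃ m, Odd m ∧ ReachBy (↑A : Set (C × C)) v w m with hOddV
    set Gm : C → Prop := fun x => ∃ w n, ReachBy (↑A : Set (C × C)) x w n ∧
      ((Even n ∧ OddV w) ∨ (Odd n ∧ ¬ OddV w)) with hGm
    set Bm : C → Prop := fun x => ∃ w n, ReachBy (↑A : Set (C × C)) x w n ∧
      ((Even n ∧ ¬ OddV w) ∨ (Odd n ∧ OddV w)) with hBm
    have hGv : Gm v := by
      refine hent C id Gm Bm (fun a b => (a, b) ∈ (↑A : Set (C × C))) ?_ ?_ ?_ ?_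
      · intro x
        by_cases h : OddV x
        · exact Or.inl ⟨x, 0, reach_zero _ _, Or.inl ⟨Even.zero, h⟩⟩
        · exact Or.inr ⟨x, 0, reach_zero _ _, Or.inl ⟨Even.zero, h⟩⟩
      · rintro x1 x0 he ⟨w, n, hr, hpar⟩
        refine ⟨w, n + 1, reach_extend hr he, ?_⟩
        rcases hpar with ⟨he', hw⟩ | ⟨ho', hw⟩
        · exact Or.inr ⟨he'.add_one, hw⟩
        · exact Or.inl ⟨ho'.add_one, hw⟩
      · rintro x1 x0 he ⟨w, n, hr, hpar⟩
        refine ⟨w, n + 1, reach_extend hr he, ?_⟩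
        rcases hpar with ⟨he', hw⟩ | ⟨ho', hw⟩
        · exact Or.inr ⟨he'.add_one, hw⟩
        · exact Or.inl ⟨ho'.add_one, hw⟩
      · intro p hp
        simpa using hp
    obtain ⟨w, n, hr, hpar⟩ := hGv
    rcases hpar with ⟨hev, hodv⟩ | ⟨hod, hnodv⟩
    · obtain ⟨m, hom, hrm⟩ := hodv
      rcases Nat.eq_zero_or_pos n with hn0 | hnpos
      · subst hn0
        have hvw : v = w := reach_zero_eq hr
        subst hvw
        have hdouble : ReachBy (↑A : Set (C × C)) v v (m + m) := reach_concat hrm hrm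
        have hmpos : 0 < m := by rcases hom with ⟨k, hk⟩; omega
        exact hno v ⟨m + m, by omega, ⟨m, rfl⟩, hdouble⟩ m hmpos hom hrm
      · have hmpos : 0 < m := by rcases hom with ⟨k, hk⟩; omega
        exact hno w ⟨n, hnpos, hev, hr⟩ m hmpos hom hrm
    · exact hnodv ⟨n, hod, hr⟩
  · rintro ⟨w, ⟨n, hn0, hne, hrn⟩, ⟨m, hm0, hmo, hrm⟩⟩
    intro D cv G B E hGB hGB2 hBG hA
    rcases hGB (cv w) with hg | hb
    · exact ((reach_parity cv G B E hGB2 hBG hA hrn).1 hne).1 hg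
    · exact ((reach_parity cv G B E hGB2 hBG hA hrm).2 hmo).2 hb
end

section
/- In the directed graph with vertices v₀,…,vₙ (n ≥ 2 even) and edge set A consisting of the chain edges from vᵢ to vᵢ₋₁ for 1 ≤ i ≤ n together with the chord from vₙ to v₀: for every proper subset A' ⊊ A and every vertex u, there is at most one path in A' from v₀ to u; in particular no vertex is reachable from any vertex by both a positive even-length and a positive odd-length path in A'. -/
/-- The 'cycle plus chord' edge set on vertices `0,…,n`: the chord `E(n,0)` together
with the chain edges `E(i,i-1)` for `1 ≤ i ≤ n`.  (`E(a,b)` is traversed towards `a`.) -/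
def chordChain (n : ℕ) : Set (ℕ × ℕ) :=
  {p | p = (n, 0) ∨ ∃ i, 1 ≤ i ∧ i ≤ n ∧ p = (i, i - 1)}

/-- `f` is a path of length `m` from `w` to `u` in `A`: `f 0 = w`, `f m = u`, and
`(f i, f (i-1)) ∈ A` for `1 ≤ i ≤ m`. -/
def IsPathFrom (A : Set (ℕ × ℕ)) (w u : ℕ) (m : ℕ) (f : ℕ → ℕ) : Prop :=
  f 0 = w ∧ f m = u ∧ ∀ i, 1 ≤ i → i ≤ m → (f i, f (i - 1)) ∈ A

lemma step_form {n a b : ℕ} (h : (a, b) ∈ chordChain n) :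
    (b = 0 ∧ a = n) ∨ (a = b + 1 ∧ 1 ≤ a ∧ a ≤ n) := by
  simp only [chordChain, Set.mem_setOf_eq, Prod.mk.injEq] at h
  rcases h with ⟨h1, h2⟩ | ⟨i, h1, h2, h3, h4⟩
  · exact Or.inl ⟨h2, h1⟩
  · right; omega

/-- Structure of paths in a subset of `chordChain`: every path is either a pure chain
path, or the single chord step. -/
lemma path_form {n : ℕ} (hn : 2 ≤ n) {A' : Set (ℕ × ℕ)} (hsub : A' ⊆ chordChain n)
    {w u m : ℕ} {f : ℕ → ℕ} (hf : IsPathFrom A' w u m f) :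
    (u = w + m ∧ (∀ i ≤ m, f i = w + i) ∧
      ∀ i, 1 ≤ i → i ≤ m → (w + i, w + i - 1) ∈ A')
    ∨ (w = 0 ∧ u = n ∧ m = 1 ∧ f 0 = 0 ∧ f 1 = n ∧ (n, 0) ∈ A') := by
  obtain ⟨h0, hm, hstep⟩ := hf
  have hpos : ∀ i, 1 ≤ i → i ≤ m → 1 ≤ f i := by
    intro i h1 h2
    rcases step_form (hsub (hstep i h1 h2)) with ⟨_, h⟩ | ⟨_, h, _⟩ <;> omega
  have hchain2 : ∀ i, 2 ≤ i → i ≤ m → f i = f (i - 1) + 1 := by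
    intro i h1 h2
    have hp := hpos (i - 1) (by omega) (by omega)
    rcases step_form (hsub (hstep i (by omega) h2)) with ⟨h, _⟩ | ⟨h, _⟩
    · omega
    · exact h
  rcases Nat.eq_zero_or_pos m with rfl | hmpos
  · left
    refine ⟨by omega, ?_, by omega⟩
    intro i hi
    interval_cases i
    omega
  · rcases step_form (hsub (hstep 1 le_rfl hmpos)) with ⟨h1, h2⟩ | ⟨h1, _⟩
    · -- chord first step
      right
      have hf0 : f 0 = 0 := h1
      have hm1 : m = 1 := by
        by_contra hc
        have h2m : 2 ≤ m := by omega
        have hc2 : f 2 = f 1 + 1 := hchain2 2 le_rfl h2m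
        rcases step_form (hsub (hstep 2 (by omega) h2m)) with ⟨ha, _⟩ | ⟨_, _, hb⟩
        · have ha' : f 1 = 0 := ha
          have h2' : f 1 = n := h2
          omega
        · have h2' : f 1 = n := h2
          omega
      subst hm1
      refine ⟨by omega, by omega, rfl, hf0, h2, ?_⟩
      have hst := hstep 1 le_rfl le_rfl
      rwa [h2, show (1:ℕ) - 1 = 0 from rfl, hf0] at hst
    · -- chain path
      left
      have h1' : f 1 = f 0 + 1 := by simpa using h1
      have key : ∀ i ≤ m, f i = w + i := by
        intro i hi
        induction i with
        | zero => simpa using h0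
        | succ j ih =>
          rcases Nat.eq_zero_or_pos j with rfl | hj
          · simpa [h0] using h1'
          · have := hchain2 (j + 1) (by omega) hi
            simp only [Nat.add_sub_cancel] at this
            rw [this, ih (by omega)]; ring
      refine ⟨by rw [← hm, key m le_rfl], key, ?_⟩
      intro i hi1 hi2
      have e1 := key i hi2
      have e2 := key (i - 1) (by omega)
      have := hstep i hi1 hi2
      have hw : w + (i - 1) = w + i - 1 := by omega
      rwa [e1, e2, hw] at this

/-- For every proper subset `A'` of the cycle-plus-chord edge set
(`n ≥ 2` even), any vertex has at most one path from `v₀ = 0` to it in `A'`, and no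
vertex is reachable from any vertex by both a positive even-length and a positive
odd-length path in `A'`. -/
theorem unique_path_in_proper_subset (n : ℕ) (hn : 2 ≤ n) (he : Even n)
    (A' : Set (ℕ × ℕ)) (hsub : A' ⊆ chordChain n) (hne : A' ≠ chordChain n) :
    (∀ u m₁ m₂ (f g : ℕ → ℕ), IsPathFrom A' 0 u m₁ f → IsPathFrom A' 0 u m₂ g →
      m₁ = m₂ ∧ ∀ i ≤ m₁, f i = g i) ∧
    (∀ w u, ¬ ((∃ m f, 0 < m ∧ Even m ∧ IsPathFrom A' w u m f) ∧
               (∃ m f, 0 < m ∧ Odd m ∧ IsPathFrom A' w u m f))) := by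
  -- if a chain path of length `n` from `0` and the chord both lie in `A'`, then
  -- `A'` is everything.
  have full : ∀ (hch : (n, 0) ∈ A')
      (hall : ∀ i, 1 ≤ i → i ≤ n → (0 + i, 0 + i - 1) ∈ A'), False := by
    intro hch hall
    apply hne
    apply Set.Subset.antisymm hsub
    intro p hp
    rcases hp with rfl | ⟨i, h1, h2, rfl⟩
    · exact hch
    · have := hall i h1 h2
      simpa using this
  constructor
  · intro u m₁ m₂ f g hf hg
    rcases path_form hn hsub hf with ⟨hu1, hf1, hf2⟩ | ⟨_, hu1, hm1, hf0, hf1, hch⟩ <;>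
      rcases path_form hn hsub hg with ⟨hu2, hg1, hg2⟩ | ⟨_, hu2, hm2, hg0, hg1, hch'⟩
    · constructor
      · omega
      · intro i hi
        rw [hf1 i hi, hg1 i (by omega)]
    · -- f chain to u = n, g chord: A' would be full
      exact absurd (full hch' (fun i h1 h2 => hf2 i h1 (by omega))) id
    · exact absurd (full hch (fun i h1 h2 => hg2 i h1 (by omega))) id
    · refine ⟨by omega, ?_⟩
      intro i hi
      subst hm1
      interval_cases i <;> omega
  · rintro w u ⟨⟨m₁, f, hm₁, hev, hf⟩, ⟨m₂, g, hm₂, hod, hg⟩⟩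
    rcases path_form hn hsub hf with ⟨hu1, _, hf2⟩ | ⟨_, _, hm1, _, _, _⟩
    · rcases path_form hn hsub hg with ⟨hu2, _, _⟩ | ⟨hw0, hu2, _, _, _, hch'⟩
      · have : m₁ = m₂ := by omega
        rw [this] at hev
        exact (Nat.not_odd_iff_even.mpr hev) hod
      · -- g is the chord, so w = 0, u = n; f is a chain path from 0 to n
        subst hw0
        exact full hch' (fun i h1 h2 => hf2 i h1 (by omega))
    · -- f is the chord, length 1, but even
      rw [hm1] at hev
      simp at hev
end

section
/- Let T be the ELU theory with clauses: F_R(x) ↔ R(x)∧∃y(edge(x,y)∧R(y)); analogously F_B and F_G with B, G; F(x) ↔ F_R(x)∨F_B(x)∨F_G(x); V(x) → R(x)∨G(x)∨B(x); NC(x) ↔ ∃y(vertex(x,y)∧F(y)). For an undirected graph H on vertices 1,…,s, let A_H be the ABox with individuals a₁,…,a_s,v containing edge(aᵢ,a_j) and edge(a_j,aᵢ) for each edge {i,j} of H, and V(aᵢ), vertex(v,aᵢ) for 1 ≤ i ≤ s. Then T ∪ A_H ⊨ NC(v) if and only if H is not 3-colorable. -/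
lemma fin3_cases (t : Fin 3) : t = 0 ∨ t = 1 ∨ t = 2 := by omega

/-- For the ELU theory `T` with
`F_R(x) ↔ R(x) ∧ ∃y(edge(x,y) ∧ R(y))` (analogously for `F_B`, `F_G`),
`F(x) ↔ F_R(x) ∨ F_B(x) ∨ F_G(x)`, `V(x) → R(x) ∨ G(x) ∨ B(x)`, and
`NC(x) ↔ ∃y(vertex(x,y) ∧ F(y))`, and the ABox `A_H` encoding an undirected graph `H`
on vertices `1,…,s` (individuals `a₁,…,a_s` and `v`, with `edge` asserted in both
directions for every edge of `H`, and `V(aᵢ)`, `vertex(v,aᵢ)` for all `i`):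
`T ∪ A_H ⊨ NC(v)` iff `H` is not 3-colorable. -/
theorem elu_nc_entailment_iff_non_3_colorable {s : ℕ}
    (H : Fin s → Fin s → Prop) (hsym : Symmetric H) :
    (∀ (D : Type) (a : Fin s → D) (v : D)
        (R G B FR FB FG F V NC : D → Prop) (edge vertex : D → D → Prop),
      (∀ x, FR x ↔ R x ∧ ∃ y, edge x y ∧ R y) →
      (∀ x, FB x ↔ B x ∧ ∃ y, edge x y ∧ B y) →
      (∀ x, FG x ↔ G x ∧ ∃ y, edge x y ∧ G y) →
      (∀ x, F x ↔ FR x ∨ FB x ∨ FG x) →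
      (∀ x, V x → R x ∨ G x ∨ B x) →
      (∀ x, NC x ↔ ∃ y, vertex x y ∧ F y) →
      (∀ i j, H i j → edge (a i) (a j) ∧ edge (a j) (a i)) →
      (∀ i, V (a i) ∧ vertex v (a i)) →
      NC v)
    ↔ ¬ ∃ c : Fin s → Fin 3, ∀ i j, H i j → c i ≠ c j := by
  constructor
  · rintro hent ⟨c, hc⟩
    classical
    let D := Option (Fin s)
    let a : Fin s → D := fun i => some i
    let Rp : D → Prop := fun x => ∃ i, x = some i ∧ c i = 0
    let Gp : D → Prop := fun x => ∃ i, x = some i ∧ c i = 1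
    let Bp : D → Prop := fun x => ∃ i, x = some i ∧ c i = 2
    let edge : D → D → Prop := fun x y =>
      ∃ i j, x = some i ∧ y = some j ∧ H i j
    let FR : D → Prop := fun x => Rp x ∧ ∃ y, edge x y ∧ Rp y
    let FB : D → Prop := fun x => Bp x ∧ ∃ y, edge x y ∧ Bp y
    let FG : D → Prop := fun x => Gp x ∧ ∃ y, edge x y ∧ Gp y
    let F : D → Prop := fun x => FR x ∨ FB x ∨ FG x
    let V : D → Prop := fun x => ∃ i, x = some i
    let vertex : D → D → Prop := fun x y => x = none ∧ ∃ i, y = some i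
    let NC : D → Prop := fun x => ∃ y, vertex x y ∧ F y
    have hnc : NC none := by
      apply hent D a none Rp Gp Bp FR FB FG F V NC edge vertex
      · intro x; exact Iff.rfl
      · intro x; exact Iff.rfl
      · intro x; exact Iff.rfl
      · intro x; exact Iff.rfl
      · rintro x ⟨i, rfl⟩
        rcases fin3_cases (c i) with h | h | h
        · exact Or.inl ⟨i, rfl, h⟩
        · exact Or.inr (Or.inl ⟨i, rfl, h⟩)
        · exact Or.inr (Or.inr ⟨i, rfl, h⟩)
      · intro x; exact Iff.rfl
      · intro i j h; exact ⟨⟨i, j, rfl, rfl, h⟩, ⟨j, i, rfl, rfl, hsym h⟩⟩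
      · intro i; exact ⟨⟨i, rfl⟩, rfl, i, rfl⟩
    obtain ⟨y, ⟨-, i, rfl⟩, hF⟩ := hnc
    rcases hF with ⟨⟨i', hi', hci⟩, y', ⟨i'', j, hi'', rfl, hij⟩, ⟨j', hj', hcj⟩⟩ |
        ⟨⟨i', hi', hci⟩, y', ⟨i'', j, hi'', rfl, hij⟩, ⟨j', hj', hcj⟩⟩ |
        ⟨⟨i', hi', hci⟩, y', ⟨i'', j, hi'', rfl, hij⟩, ⟨j', hj', hcj⟩⟩ <;>
      · cases Option.some.inj hi'
        cases Option.some.inj hi''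
        cases Option.some.inj hj'
        exact hc _ _ hij (hci.trans hcj.symm)
  · intro hncol
    intro D a v R G B FR FB FG F V NC edge vertex hFR hFB hFG hF hV hNC hedge hab
    classical
    by_contra hnc
    apply hncol
    refine ⟨fun i => if R (a i) then 0 else if G (a i) then 1 else 2, ?_⟩
    intro i j hij hceq
    have hnF : ∀ i, ¬ F (a i) := fun i hFi =>
      hnc ((hNC v).2 ⟨a i, (hab i).2, hFi⟩)
    have col : ∀ k, (if R (a k) then (0:Fin 3) else if G (a k) then 1 else 2) = 0 ∧ R (a k)
        ∨ (if R (a k) then (0:Fin 3) else if G (a k) then 1 else 2) = 1 ∧ G (a k)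
        ∨ (if R (a k) then (0:Fin 3) else if G (a k) then 1 else 2) = 2 ∧ B (a k) := by
      intro k
      by_cases hr : R (a k)
      · exact Or.inl ⟨if_pos hr, hr⟩
      · by_cases hg : G (a k)
        · refine Or.inr (Or.inl ⟨?_, hg⟩); rw [if_neg hr, if_pos hg]
        · refine Or.inr (Or.inr ⟨?_, ?_⟩)
          · rw [if_neg hr, if_neg hg]
          · rcases hV (a k) (hab k).1 with h | h | h
            · exact absurd h hr
            · exact absurd h hg
            · exact h
    have edgeij := (hedge i j hij).1
    have contra : ∀ P FP : D → Prop, (∀ x, FP x ↔ P x ∧ ∃ y, edge x y ∧ P y) →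
        (FP (a i) → F (a i)) → P (a i) → P (a j) → False := by
      intro P FP hiff hto hi hj
      exact hnF i (hto ((hiff _).2 ⟨hi, a j, edgeij, hj⟩))
    have hceq' : (if R (a i) then (0:Fin 3) else if G (a i) then 1 else 2)
        = (if R (a j) then (0:Fin 3) else if G (a j) then 1 else 2) := hceq
    rcases col i with ⟨hei, hpi⟩ | ⟨hei, hpi⟩ | ⟨hei, hpi⟩ <;>
      rcases col j with ⟨hej, hpj⟩ | ⟨hej, hpj⟩ | ⟨hej, hpj⟩ <;>
      rw [hei, hej] at hceq' <;>
      first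
      | exact absurd hceq' (by decide)
      | exact contra R FR hFR (fun h => (hF _).2 (Or.inl h)) hpi hpj
      | exact contra G FG hFG (fun h => (hF _).2 (Or.inr (Or.inr h))) hpi hpj
      | exact contra B FB hFB (fun h => (hF _).2 (Or.inr (Or.inl h))) hpi hpj
end

section
/- Over a finite signature, a saturation process that only keeps pairwise non-variant clauses of size bounded by a fixed constant k terminates: any set of clauses over finitely many predicates in which every clause has at most k literals and no two clauses are variants of each other is finite. -/
/-- A literal over a finite signature: a sign, a predicate `p : P`, and an argument
tuple of variables of length `ar p`. -/
abbrev GLit (P V : Type) (ar : P → ℕ) := Bool × Σ p : P, Fin (ar p) → V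

/-- Applying a variable substitution to a literal. -/
def substGLit {P V : Type} {ar : P → ℕ} (σ : V → V) (l : GLit P V ar) : GLit P V ar :=
  (l.1, ⟨l.2.1, fun i => σ (l.2.2 i)⟩)

/-- Two clauses are variants: each subsumes the other via a variable renaming
(an injective variable-to-variable substitution). -/
def VariantOf {P V : Type} {ar : P → ℕ} [DecidableEq P] [DecidableEq V]
    (Cl Dl : Finset (GLit P V ar)) : Prop :=
  (∃ σ : V → V, Function.Injective σ ∧ Cl.image (substGLit σ) ⊆ Dl) ∧
  (∃ τ : V → V, Function.Injective τ ∧ Dl.image (substGLit τ) ⊆ Cl)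

namespace BPNF

variable {P V : Type} {ar : P → ℕ}

/-- Cross-type literal mapping. -/
def mapLit {W : Type} (σ : V → W) (l : GLit P V ar) : GLit P W ar :=
  (l.1, ⟨l.2.1, fun i => σ (l.2.2 i)⟩)

/-- Variables of a literal. -/
def litVars [DecidableEq V] (l : GLit P V ar) : Finset V :=
  Finset.image l.2.2 Finset.univ

/-- Variables of a clause. -/
def clVars [DecidableEq V] (Cl : Finset (GLit P V ar)) : Finset V :=
  Cl.biUnion litVars

lemma mem_clVars [DecidableEq V] {Cl : Finset (GLit P V ar)} {l : GLit P V ar}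
    {v : V} (hl : l ∈ Cl) (hv : v ∈ litVars l) : v ∈ clVars Cl :=
  Finset.mem_biUnion.mpr ⟨l, hl, hv⟩

lemma mapLit_congr {W : Type} [DecidableEq V] {σ τ : V → W} {l : GLit P V ar}
    (h : ∀ v ∈ litVars l, σ v = τ v) : mapLit σ l = mapLit τ l := by
  have : (fun i => σ (l.2.2 i)) = fun i => τ (l.2.2 i) := by
    funext i
    exact h _ (Finset.mem_image_of_mem l.2.2 (Finset.mem_univ i))
  simp only [mapLit, this]

lemma mapLit_id [DecidableEq V] {σ : V → V} {l : GLit P V ar}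
    (h : ∀ v ∈ litVars l, σ v = v) : mapLit σ l = l :=
  (mapLit_congr (τ := id) h).trans rfl

lemma clVars_map {W : Type} [DecidableEq P] [DecidableEq V] [DecidableEq W]
    (σ : V → W) (Cl : Finset (GLit P V ar)) :
    clVars (Cl.image (mapLit σ)) = (clVars Cl).image σ := by
  ext w
  simp only [clVars, Finset.mem_biUnion, Finset.mem_image, litVars, Finset.mem_univ,
    true_and]
  constructor
  · rintro ⟨l', ⟨l, hl, rfl⟩, i, hi⟩
    exact ⟨l.2.2 i, ⟨l, hl, i, rfl⟩, hi⟩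
  · rintro ⟨v, ⟨l, hl, i, rfl⟩, hw⟩
    exact ⟨mapLit σ l, ⟨l, hl, rfl⟩, i, hw⟩

/-- Encoding a finite set of variables into an initial segment. -/
noncomputable def enc [DecidableEq V] (A : Finset V) {N : ℕ} (hA : A.card ≤ N) :
    V → Fin (N + 1) :=
  fun v => if h : v ∈ A then Fin.castLE (by omega) (A.equivFin ⟨v, h⟩) else 0

/-- Decoding back. -/
noncomputable def dec [DecidableEq V] [Nonempty V] (A : Finset V) {N : ℕ} :
    Fin (N + 1) → V :=
  fun i => if h : (i : ℕ) < A.card then (A.equivFin.symm ⟨i, h⟩ : V)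
    else Classical.arbitrary V

lemma dec_enc [DecidableEq V] [Nonempty V] (A : Finset V) {N : ℕ} (hA : A.card ≤ N)
    {v : V} (hv : v ∈ A) : dec A (enc A hA v) = v := by
  rw [enc, dif_pos hv, dec]
  have h1 : ((Fin.castLE (by omega) (A.equivFin ⟨v, hv⟩) : Fin (N + 1)) : ℕ) < A.card :=
    (A.equivFin ⟨v, hv⟩).isLt
  rw [dif_pos h1]
  have h2 : (⟨_, h1⟩ : Fin A.card) = A.equivFin ⟨v, hv⟩ := by
    ext; simp [Fin.castLE]
  rw [h2, Equiv.symm_apply_apply]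

end BPNF

open BPNF in
/-- any set of clauses over finitely many predicates (of bounded arity)
in which every clause has at most `k` literals and no two distinct clauses are
variants of each other is finite. -/
theorem bounded_pairwise_nonvariant_finite {P V : Type} [Fintype P] [DecidableEq P]
    [DecidableEq V] (ar : P → ℕ) (k : ℕ)
    (S : Set (Finset (GLit P V ar)))
    (hcard : ∀ Cl ∈ S, Cl.card ≤ k)
    (hnv : ∀ Cl ∈ S, ∀ Dl ∈ S, Cl ≠ Dl → ¬ VariantOf Cl Dl) :
    S.Finite := by
  classical
  cases finite_or_infinite V with
  | inl hV =>
    haveI : Fintype (GLit P V ar) := Fintype.ofFinite _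
    exact S.toFinite
  | inr hV =>
    haveI : Nonempty V := inferInstance
    set M : ℕ := Finset.univ.sup ar with hM
    set N : ℕ := k * M with hN
    -- bound on the number of variables of a clause in S
    have hbound : ∀ Cl ∈ S, (clVars Cl).card ≤ N := by
      intro Cl hCl
      calc (clVars Cl).card ≤ ∑ l ∈ Cl, (litVars (ar := ar) l).card :=
            Finset.card_biUnion_le
        _ ≤ ∑ _l ∈ Cl, M := by
            refine Finset.sum_le_sum fun l _ => ?_
            calc (litVars (ar := ar) l).card ≤ (Finset.univ : Finset (Fin (ar l.2.1))).card :=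
                  Finset.card_image_le
              _ = ar l.2.1 := by simp
              _ ≤ M := Finset.le_sup (Finset.mem_univ _)
        _ = Cl.card * M := by rw [Finset.sum_const, smul_eq_mul]
        _ ≤ k * M := Nat.mul_le_mul_right M (hcard Cl hCl)
    -- the encoding map
    let F : Finset (GLit P V ar) → Finset (GLit P (Fin (N + 1)) ar) := fun Cl =>
      if h : (clVars Cl).card ≤ N then Cl.image (mapLit (enc (clVars Cl) h)) else ∅
    -- key: equal codes imply variance
    have key : ∀ Cl ∈ S, ∀ Dl ∈ S, F Cl = F Dl → VariantOf Cl Dl := by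
      intro Cl hCl Dl hDl hF
      have hA := hbound Cl hCl
      have hB := hbound Dl hDl
      simp only [F, dif_pos hA, dif_pos hB] at hF
      -- a round-trip map sending Cl exactly onto Dl
      have himg : ∀ (X Y : Finset (GLit P V ar)) (hX : (clVars X).card ≤ N)
          (hY : (clVars Y).card ≤ N),
          X.image (mapLit (enc (clVars X) hX)) = Y.image (mapLit (enc (clVars Y) hY)) →
          X.image (substGLit (fun v => dec (clVars Y) (enc (clVars X) hX v))) = Y := by
        intro X Y hX hY hXY
        have e1 : X.image (substGLit (fun v => dec (clVars Y) (enc (clVars X) hX v)))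
            = (X.image (mapLit (enc (clVars X) hX))).image (mapLit (dec (clVars Y))) := by
          rw [Finset.image_image]; rfl
        rw [e1, hXY, Finset.image_image]
        have : ∀ l ∈ Y, (mapLit (dec (clVars Y)) ∘ mapLit (enc (clVars Y) hY)) l = l := by
          intro l hl
          show mapLit (fun v => dec (clVars Y) (enc (clVars Y) hY v)) l = l
          exact mapLit_id fun v hv => dec_enc _ hY (mem_clVars hl hv)
        rw [Finset.image_congr this]; exact Finset.image_id'
      set σ0 : V → V := fun v => dec (clVars Dl) (enc (clVars Cl) hA v) with hσ0
      set τ0 : V → V := fun v => dec (clVars Cl) (enc (clVars Dl) hB v) with hτ0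
      have hCD : Cl.image (substGLit σ0) = Dl := himg Cl Dl hA hB hF
      have hDC : Dl.image (substGLit τ0) = Cl := himg Dl Cl hB hA hF.symm
      -- σ0 maps clVars Cl onto clVars Dl, and cards are equal
      have hv1 : (clVars Cl).image σ0 = clVars Dl := by
        have := clVars_map (P := P) (ar := ar) σ0 Cl
        rw [show Cl.image (mapLit σ0) = Cl.image (substGLit σ0) from rfl, hCD] at this
        exact this.symm
      have hv2 : (clVars Dl).image τ0 = clVars Cl := by
        have := clVars_map (P := P) (ar := ar) τ0 Dl
        rw [show Dl.image (mapLit τ0) = Dl.image (substGLit τ0) from rfl, hDC] at this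
        exact this.symm
      have hcards : ((clVars Cl).image σ0).card = (clVars Cl).card := by
        have l1 : (clVars Dl).card ≤ (clVars Cl).card := by
          rw [← hv1]; exact Finset.card_image_le
        have l2 : (clVars Cl).card ≤ (clVars Dl).card := by
          rw [← hv2]; exact Finset.card_image_le
        rw [hv1]; omega
      have hinjA : Set.InjOn σ0 (clVars Cl) := Finset.card_image_iff.mp hcards
      have hcards2 : ((clVars Dl).image τ0).card = (clVars Dl).card := by
        have l1 : (clVars Dl).card ≤ (clVars Cl).card := by
          rw [← hv1]; exact Finset.card_image_le
        have l2 : (clVars Cl).card ≤ (clVars Dl).card := by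
          rw [← hv2]; exact Finset.card_image_le
        rw [hv2]; omega
      have hinjB : Set.InjOn τ0 (clVars Dl) := Finset.card_image_iff.mp hcards2
      -- extend to global injections
      have ext : ∀ (ρ : V → V) (A : Finset V), Set.InjOn ρ (A : Set V) →
          ∃ g : V → V, Function.Injective g ∧ ∀ v ∈ A, g v = ρ v := by
        intro ρ A hρ
        have hlt : Cardinal.mk (A : Set V) < Cardinal.mk V :=
          lt_of_lt_of_le (Cardinal.lt_aleph0_of_finite _) (Cardinal.aleph0_le_mk V)
        obtain ⟨g, hg⟩ := Cardinal.extend_function_of_lt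
          ⟨fun x : (A : Set V) => ρ x, (Set.injOn_iff_injective.mp hρ)⟩ hlt
          ⟨Equiv.refl V⟩
        exact ⟨g, g.injective, fun v hv => hg ⟨v, hv⟩⟩
      obtain ⟨σ, hσinj, hσ⟩ := ext σ0 (clVars Cl) hinjA
      obtain ⟨τ, hτinj, hτ⟩ := ext τ0 (clVars Dl) hinjB
      have eq1 : Cl.image (substGLit σ) = Dl := by
        rw [← hCD]
        refine Finset.image_congr fun l hl => ?_
        exact mapLit_congr fun v hv => hσ v (mem_clVars hl hv)
      have eq2 : Dl.image (substGLit τ) = Cl := by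
        rw [← hDC]
        refine Finset.image_congr fun l hl => ?_
        exact mapLit_congr fun v hv => hτ v (mem_clVars hl hv)
      exact ⟨⟨σ, hσinj, eq1.le⟩, ⟨τ, hτinj, eq2.le⟩⟩
    -- F is injective on S
    have hinj : Set.InjOn F S := by
      intro Cl hCl Dl hDl hF
      by_contra hne
      exact hnv Cl hCl Dl hDl hne (key Cl hCl Dl hDl hF)
    haveI : Fintype (GLit P (Fin (N + 1)) ar) := Fintype.ofFinite _
    exact Set.Finite.of_finite_image (Set.toFinite _) hinj
end
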